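/- Let H be a real inner product space, and let s : ℝⁿ → H be a differentiable map with s(x₀) ≠ 0. Then |s| is differentiable at x₀ and the gradient of |s| at x₀ has norm at most the operator/Frobenius norm of the derivative of s at x₀; equivalently |∇|s||² ≤ |∇s|² at x₀. -/

import Mathlib

open scoped BigOperators

open RealInnerProductSpace in
lemma hasFDerivAt_norm_of_ne' {H : Type*} [NormedAddCommGroup H] [InnerProductSpace ℝ H]
    {x : H} (hx : x ≠ 0) :
    HasFDerivAt (fun y : H => ‖y‖) ((1 / (2 * ‖x‖)) • (2 • innerSL ℝ x)) x := by
  have h2 : HasFDerivAt (fun y : H => ‖y‖ ^ 2) (2 • innerSL ℝ x) x :=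
    (hasStrictFDerivAt_norm_sq x).hasFDerivAt
  have hsq : (‖x‖ : ℝ) ^ 2 ≠ 0 := pow_ne_zero _ (norm_ne_zero_iff.mpr hx)
  have hsqrt : HasDerivAt Real.sqrt (1 / (2 * Real.sqrt (‖x‖ ^ 2))) (‖x‖ ^ 2) :=
    Real.hasDerivAt_sqrt hsq
  have := hsqrt.comp_hasFDerivAt x h2
  have heq : (fun y : H => Real.sqrt (‖y‖ ^ 2)) = fun y : H => ‖y‖ := by
    funext y; rw [Real.sqrt_sq (norm_nonneg y)]
  rw [show (Real.sqrt ∘ fun y : H => ‖y‖ ^ 2) = fun y : H => ‖y‖ from heq,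
    Real.sqrt_sq (norm_nonneg x)] at this
  exact this

/-- Finite-dimensional model of the Kato inequality.  Let `H` be a real inner product space
and `s : ℝⁿ → H` differentiable at `x₀` with `s x₀ ≠ 0`.  Then `|s|` is differentiable at
`x₀` and `|∇|s||² ≤ |∇s|²`, where `|∇s|² = ∑ᵢ ‖∂ᵢ s‖²`. -/
theorem kato_inequality_euclidean
    (n : ℕ) (H : Type*) [NormedAddCommGroup H] [InnerProductSpace ℝ H]
    (s : EuclideanSpace ℝ (Fin n) → H) (x₀ : EuclideanSpace ℝ (Fin n))
    (hs : DifferentiableAt ℝ s x₀) (hx : s x₀ ≠ 0) :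
    DifferentiableAt ℝ (fun x => ‖s x‖) x₀ ∧
    ‖gradient (fun x => ‖s x‖) x₀‖ ^ 2 ≤
      ∑ i : Fin n, ‖fderiv ℝ s x₀ (EuclideanSpace.single i 1)‖ ^ 2 := by
  set g : EuclideanSpace ℝ (Fin n) → ℝ := fun x => ‖s x‖ with hg
  have hds := hs.hasFDerivAt
  have hL : HasFDerivAt g
      (((1 / (2 * ‖s x₀‖)) • (2 • innerSL ℝ (s x₀))).comp (fderiv ℝ s x₀)) x₀ :=
    (hasFDerivAt_norm_of_ne' hx).comp x₀ hds
  have hdiff : DifferentiableAt ℝ g x₀ := hL.differentiableAt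
  refine ⟨hdiff, ?_⟩
  -- pointwise bound on directional derivatives
  have key : ∀ v, |fderiv ℝ g x₀ v| ≤ ‖fderiv ℝ s x₀ v‖ := by
    intro v
    rw [hL.fderiv]
    have ha : (0:ℝ) < ‖s x₀‖ := norm_pos_iff.mpr hx
    have hinner : |inner ℝ (s x₀) (fderiv ℝ s x₀ v)| ≤ ‖s x₀‖ * ‖fderiv ℝ s x₀ v‖ :=
      abs_real_inner_le_norm _ _
    simp only [ContinuousLinearMap.comp_apply, ContinuousLinearMap.smul_apply, innerSL_apply_apply,
      smul_eq_mul, nsmul_eq_mul, Nat.cast_ofNat]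
    rw [abs_mul, abs_mul, abs_two, abs_of_nonneg (by positivity : (0:ℝ) ≤ 1 / (2 * ‖s x₀‖))]
    calc 1 / (2 * ‖s x₀‖) * (2 * |inner ℝ (s x₀) (fderiv ℝ s x₀ v)|)
        = |inner ℝ (s x₀) (fderiv ℝ s x₀ v)| / ‖s x₀‖ := by field_simp
      _ ≤ ‖fderiv ℝ s x₀ v‖ := by
          rw [div_le_iff₀ ha]
          calc |inner ℝ (s x₀) (fderiv ℝ s x₀ v)| ≤ ‖s x₀‖ * ‖fderiv ℝ s x₀ v‖ := hinner
            _ = ‖fderiv ℝ s x₀ v‖ * ‖s x₀‖ := mul_comm _ _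
  -- gradient coordinates are directional derivatives
  have hgrad : ∀ v, inner ℝ (gradient g x₀) v = fderiv ℝ g x₀ v := by
    intro v
    rw [gradient, InnerProductSpace.toDual_symm_apply]
  have hnorm : ‖gradient g x₀‖ ^ 2 =
      ∑ i : Fin n, (fderiv ℝ g x₀ (EuclideanSpace.single i 1)) ^ 2 := by
    rw [EuclideanSpace.norm_eq, Real.sq_sqrt (by positivity)]
    refine Finset.sum_congr rfl fun i _ => ?_
    rw [← hgrad (EuclideanSpace.single i 1)]
    rw [real_inner_comm, EuclideanSpace.inner_single_left]
    simp [sq_abs]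
  rw [hnorm]
  refine Finset.sum_le_sum fun i _ => ?_
  have := key (EuclideanSpace.single i 1)
  calc (fderiv ℝ g x₀ (EuclideanSpace.single i 1)) ^ 2
      = |fderiv ℝ g x₀ (EuclideanSpace.single i 1)| ^ 2 := (sq_abs _).symm
    _ ≤ ‖fderiv ℝ s x₀ (EuclideanSpace.single i 1)‖ ^ 2 := by gcongr
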